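/- Construction of Theorem 1 (single Hamiltonian path case): Let p ≥ 2, q a multiple of p, n ≥ 2, r ≥ 0. Let Q be the quadratic form of a Hamiltonian path on n variables with permutation π, let H(x) = Q(x) + ∑γ_i x_i + θ, and for 0 ≤ α, β < p and 0 ≤ δ < p^r define F_β^{αp^r + δ}(x_0,…,x_{n+r-1}) = H(x_0,…,x_{n-1}) + (q/p)(α x_{π(0)} + β x_{π(n-1)}) + (q/p)·δ·(x_n,…,x_{n+r-1}). With codes C_{αp^r+δ} = [χ(F_0^{αp^r+δ}); …; χ(F_{p-1}^{αp^r+δ})], the collection {C_0,…,C_{p^{1+r}-1}} is a type-II (p^{1+r}, p, p^{n+r} - p^r + 1, p^{n+r})-ZCCS; i.e., (i) for any two codes C_s, C_t, the cross-correlation sum ∑_{β=0}^{p-1} C_{χ(F_β^s), χ(F_β^t)}(τ) = 0 whenever |τ| ≥ p^r, and (ii) for s ≠ t, ∑_{β=0}^{p-1} C_{χ(F_β^s), χ(F_β^t)}(0) = 0. -/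

import Mathlib

/-- `ζ_q^e` for an integer exponent `e`. -/
noncomputable def zeta (q : ℕ) (e : ℤ) : ℂ :=
  Complex.exp (2 * Real.pi * Complex.I * (e : ℂ) / (q : ℂ))

/-- the `i`-th base-`p` digit of `I`, for vectors of length `m`,
under the identification `I = ∑_{i=0}^{m-1} p^{m-1-i} I_i`. -/
def dgt (p m i I : ℕ) : ℕ := I / p ^ (m - 1 - i) % p

/-- Aperiodic cross-correlation of sequences `a, b` of length `N` at integer shift `τ`. -/
noncomputable def accs (N : ℕ) (a b : ℕ → ℂ) (τ : ℤ) : ℂ :=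
  if 0 ≤ τ ∧ τ < (N : ℤ) then
    ∑ i ∈ Finset.range (N - τ.toNat), a (i + τ.toNat) * (starRingEnd ℂ) (b i)
  else if -(N : ℤ) < τ ∧ τ < 0 then
    ∑ i ∈ Finset.range (N - (-τ).toNat), a i * (starRingEnd ℂ) (b (i + (-τ).toNat))
  else 0

/-- The multi-variable function of Theorem 1 (single Hamiltonian path plus `r` isolated
vertices), evaluated at the integer `I ∈ [0, p^{n+r})` identified with its base-`p`
digit vector: `F_β^{αp^r+δ}(x) = (q/p)∑_{i=1}^{n-1} x_{π(i-1)}x_{π(i)} + ∑ γ_i x_i + θ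
+ (q/p)(α x_{π(0)} + β x_{π(n-1)}) + (q/p)·δ·(x_n,…,x_{n+r-1})`. -/
def Fval (p q n r : ℕ) (hn : 2 ≤ n) (π : Equiv.Perm (Fin n)) (γ : Fin n → ℕ) (θ : ℕ)
    (α β δ I : ℕ) : ℤ :=
  ((q / p : ℕ) : ℤ) *
    (∑ i : Fin n, if h : 1 ≤ (i : ℕ) then
        (dgt p (n + r) (π ⟨(i : ℕ) - 1, by omega⟩) I : ℤ) * (dgt p (n + r) (π i) I : ℤ)
      else 0)
  + ∑ i : Fin n, (γ i : ℤ) * (dgt p (n + r) i I : ℤ) + (θ : ℤ)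
  + ((q / p : ℕ) : ℤ) *
      ((α : ℤ) * (dgt p (n + r) (π ⟨0, by omega⟩) I : ℤ) +
       (β : ℤ) * (dgt p (n + r) (π ⟨n - 1, by omega⟩) I : ℤ))
  + ((q / p : ℕ) : ℤ) *
      ∑ j ∈ Finset.range r, (dgt p r j δ : ℤ) * (dgt p (n + r) (n + j) I : ℤ)

lemma zeta_add (q : ℕ) (a b : ℤ) : zeta q (a + b) = zeta q a * zeta q b := by
  unfold zeta
  rw [← Complex.exp_add]
  congr 1
  push_cast
  ring

lemma conj_zeta (q : ℕ) (a : ℤ) : (starRingEnd ℂ) (zeta q a) = zeta q (-a) := by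
  unfold zeta
  rw [← Complex.exp_conj]
  congr 1
  simp only [map_div₀, map_mul, Complex.conj_I, map_ofNat, Complex.conj_natCast]
  rw [show ((starRingEnd ℂ) (a:ℂ)) = (a:ℂ) from by simp]
  rw [Complex.conj_ofReal]
  push_cast
  ring

lemma zeta_mul_p (p q : ℕ) (hp : 0 < p) (hq : 0 < q) (hpq : p ∣ q) (x : ℤ) :
    zeta q (((q / p : ℕ) : ℤ) * x) = zeta p x := by
  unfold zeta
  congr 1
  obtain ⟨c, rfl⟩ := hpq
  have hc0 : c ≠ 0 := by rintro rfl; simp at hq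
  rw [Nat.mul_div_cancel_left _ hp]
  have hp' : (p : ℂ) ≠ 0 := by exact_mod_cast hp.ne'
  have hc' : (c : ℂ) ≠ 0 := by exact_mod_cast hc0
  push_cast
  field_simp

lemma zeta_one_ne_one (p : ℕ) (hp : 0 < p) (c : ℤ) (hc : ¬ (p : ℤ) ∣ c) :
    zeta p c ≠ 1 := by
  unfold zeta
  simp only [ne_eq, Complex.exp_eq_one_iff]
  rintro ⟨k, hk⟩
  apply hc
  have hp' : (p : ℂ) ≠ 0 := by exact_mod_cast hp.ne'
  have hpi : (2 : ℂ) * Real.pi * Complex.I ≠ 0 := by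
    simp [Real.pi_ne_zero, Complex.I_ne_zero]
  have hk' : (2 * Real.pi * Complex.I) * (c : ℂ) = (2 * Real.pi * Complex.I) * ((k : ℂ) * p) := by
    field_simp at hk
    linear_combination (2 * Real.pi * Complex.I) * hk
  have hc' : (c : ℂ) = (k : ℂ) * p := mul_left_cancel₀ hpi hk'
  have : c = k * p := by exact_mod_cast hc'
  exact ⟨k, by linarith⟩

lemma zeta_geom (p : ℕ) (hp : 0 < p) (c : ℤ) (hc : ¬ (p : ℤ) ∣ c) :
    ∑ d ∈ Finset.range p, zeta p (d * c) = 0 := by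
  have hpow : ∀ d : ℕ, zeta p ((d : ℤ) * c) = zeta p c ^ d := by
    intro d
    unfold zeta
    rw [← Complex.exp_nat_mul]
    congr 1
    push_cast
    ring
  simp only [hpow]
  rw [geom_sum_eq (zeta_one_ne_one p hp c hc)]
  have hz : zeta p c ^ p = 1 := by
    unfold zeta
    rw [← Complex.exp_nat_mul]
    have hp' : (p : ℂ) ≠ 0 := by exact_mod_cast hp.ne'
    have : (p : ℂ) * (2 * Real.pi * Complex.I * c / p) = c * (2 * Real.pi * Complex.I) := by
      field_simp
    rw [this, Complex.exp_int_mul_two_pi_mul_I]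
  rw [hz, sub_self, zero_div]

/-- replace the base-`p` digit of weight `p^w` in `I` by `d`. -/
def repl (p w I d : ℕ) : ℕ := I % p ^ w + (d + I / p ^ (w + 1) * p) * p ^ w

section repl
variable {p w I d : ℕ}

lemma repl_mod : repl p w I d % p ^ w = I % p ^ w := by
  unfold repl
  rw [Nat.add_mul_mod_self_right, Nat.mod_mod_of_dvd _ dvd_rfl]

lemma repl_div (hp : 0 < p) : repl p w I d / p ^ w = d + I / p ^ (w + 1) * p := by
  unfold repl
  rw [Nat.add_mul_div_right _ _ (pow_pos hp w), Nat.div_eq_of_lt (Nat.mod_lt _ (pow_pos hp w)),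
    zero_add]

lemma repl_dgt (hp : 0 < p) (hd : d < p) : repl p w I d / p ^ w % p = d := by
  rw [repl_div hp, Nat.add_mul_mod_self_right, Nat.mod_eq_of_lt hd]

lemma repl_div_high (hp : 0 < p) (hd : d < p) : repl p w I d / p ^ (w + 1) = I / p ^ (w + 1) := by
  have : repl p w I d / p ^ (w + 1) = repl p w I d / p ^ w / p := by
    rw [Nat.div_div_eq_div_mul, pow_succ]
  rw [this, repl_div hp, Nat.add_mul_div_right _ _ hp, Nat.div_eq_of_lt hd, zero_add]

lemma div_succ_eq (X : ℕ) : X / p ^ (w + 1) = X / p ^ w / p := by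
  rw [Nat.div_div_eq_div_mul, pow_succ]

lemma repl_int (hp : 0 < p) :
    (repl p w I d : ℤ) = I + ((d : ℤ) - (I / p ^ w % p : ℕ)) * p ^ w := by
  have A : ((I : ℤ)) = (I % p ^ w : ℕ) + (I / p ^ w : ℕ) * ((p : ℤ)) ^ w := by
    exact_mod_cast (Nat.mod_add_div' I (p ^ w)).symm
  have B : ((I / p ^ w : ℕ) : ℤ) = (I / p ^ w % p : ℕ) + (p : ℤ) * (I / p ^ w / p : ℕ) := by
    exact_mod_cast (Nat.mod_add_div (I / p ^ w) p).symm
  unfold repl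
  rw [div_succ_eq]
  push_cast at A B ⊢
  linear_combination -A - (p : ℤ) ^ w * B

lemma repl_lt {m : ℕ} (hp : 0 < p) (hI : I < p ^ m) (hw : w < m) (hd : d < p) :
    repl p w I d < p ^ m := by
  have h1 : I / p ^ (w + 1) < p ^ (m - (w + 1)) := by
    apply Nat.div_lt_of_lt_mul
    rw [← pow_add]
    have : w + 1 + (m - (w + 1)) = m := by omega
    rw [this]; exact hI
  have h2 : repl p w I d < p ^ (w + 1) + I / p ^ (w + 1) * p * p ^ w := by
    unfold repl
    have hm : I % p ^ w < p ^ w := Nat.mod_lt _ (pow_pos hp w)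
    have hdd : d * p ^ w + p ^ w ≤ p * p ^ w := by
      rw [← Nat.succ_mul]
      exact Nat.mul_le_mul_right _ hd
    rw [pow_succ]
    nlinarith [pow_pos hp w]
  calc repl p w I d < p ^ (w + 1) + I / p ^ (w + 1) * p * p ^ w := h2
    _ = (I / p ^ (w + 1) + 1) * p ^ (w + 1) := by rw [pow_succ]; ring
    _ ≤ p ^ (m - (w + 1)) * p ^ (w + 1) := Nat.mul_le_mul_right _ (by omega)
    _ = p ^ m := by rw [← pow_add]; congr 1; omega

lemma repl_self : repl p w I (I / p ^ w % p) = I := by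
  unfold repl
  rw [div_succ_eq, Nat.mod_add_div', Nat.mod_add_div']

lemma repl_repl (hp : 0 < p) (hd : d < p) (d' : ℕ) :
    repl p w (repl p w I d) d' = repl p w I d' := by
  have h : repl p w (repl p w I d) d' =
      repl p w I d % p ^ w + (d' + repl p w I d / p ^ (w + 1) * p) * p ^ w := rfl
  rw [h, repl_mod, repl_div_high hp hd]
  rfl

lemma repl_add (hp : 0 < p) (σ : ℕ) (h : (I + σ) / p ^ w % p = I / p ^ w % p) :
    repl p w (I + σ) d = repl p w I d + σ := by
  have h1 := repl_int (p := p) (w := w) (I := I + σ) (d := d) hp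
  have h2 := repl_int (p := p) (w := w) (I := I) (d := d) hp
  rw [h] at h1
  have : (repl p w (I + σ) d : ℤ) = (repl p w I d : ℤ) + σ := by
    push_cast at h1 h2 ⊢
    linarith
  exact_mod_cast this

lemma repl_dgt_lo (hp : 0 < p) {w' : ℕ} (hw' : w' < w) :
    repl p w I d / p ^ w' % p = I / p ^ w' % p := by
  have key : ∀ X : ℕ, X / p ^ w' % p = X % p ^ w / p ^ w' % p := by
    intro X
    have e1 : p ^ w = p ^ w' * p ^ (w - w') := by rw [← pow_add]; congr 1; omega
    rw [e1, Nat.mod_mul_right_div_self]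
    rw [Nat.mod_mod_of_dvd]
    exact dvd_pow_self p (by omega)
  rw [key, key I, repl_mod]

lemma repl_dgt_hi (hp : 0 < p) (hd : d < p) {w' : ℕ} (hw' : w < w') :
    repl p w I d / p ^ w' % p = I / p ^ w' % p := by
  have e1 : ∀ X : ℕ, X / p ^ w' = X / p ^ (w + 1) / p ^ (w' - (w + 1)) := by
    intro X
    rw [Nat.div_div_eq_div_mul, ← pow_add]
    congr 2
    omega
  rw [e1, e1 I, repl_div_high hp hd]

lemma repl_dgt_ne (hp : 0 < p) (hd : d < p) {w' : ℕ} (hw' : w' ≠ w) :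
    repl p w I d / p ^ w' % p = I / p ^ w' % p := by
  rcases lt_or_gt_of_ne hw' with h | h
  · exact repl_dgt_lo hp h
  · exact repl_dgt_hi hp hd h

end repl

lemma eq_of_dgts (p : ℕ) (hp : 0 < p) :
    ∀ n X Y, X < p ^ n → Y < p ^ n → (∀ w < n, X / p ^ w % p = Y / p ^ w % p) → X = Y := by
  intro n
  induction n with
  | zero => intro X Y hX hY _; simp at hX hY; omega
  | succ n ih =>
    intro X Y hX hY h
    have h0 : X % p = Y % p := by
      have := h 0 (by omega)
      simpa using this
    have hdiv : X / p = Y / p := by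
      apply ih
      · rw [Nat.div_lt_iff_lt_mul hp, ← pow_succ]; exact hX
      · rw [Nat.div_lt_iff_lt_mul hp, ← pow_succ]; exact hY
      · intro w hw
        have e : ∀ Z : ℕ, Z / p / p ^ w = Z / p ^ (w + 1) := by
          intro Z
          rw [Nat.div_div_eq_div_mul, pow_succ, mul_comm]
        rw [e, e Y]
        exact h (w + 1) (by omega)
    have hX' := Nat.div_add_mod X p
    have hY' := Nat.div_add_mod Y p
    rw [hdiv, h0] at hX'
    omega

lemma orbit_sum (p : ℕ) (hp : 0 < p) (S : Finset ℕ) (f : ℕ → ℂ) (w : ℕ → ℕ) (c : ℕ → ℤ)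
    (hrep : ∀ i ∈ S, ∀ d < p, repl p (w i) i d ∈ S)
    (hw : ∀ i ∈ S, ∀ d < p, w (repl p (w i) i d) = w i)
    (hf : ∀ i ∈ S, ∀ d < p, f (repl p (w i) i d) = f (repl p (w i) i 0) * zeta p (d * c i))
    (hc : ∀ i ∈ S, ¬ (p : ℤ) ∣ c i) :
    ∑ i ∈ S, f i = 0 := by
  classical
  set R : ℕ → ℕ := fun i => repl p (w i) i 0 with hR
  rw [← Finset.sum_fiberwise_of_maps_to (g := R) (t := S.image R)
    (fun i hi => Finset.mem_image_of_mem R hi) f]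
  apply Finset.sum_eq_zero
  intro r hr
  obtain ⟨i₀, hi₀, hri⟩ := Finset.mem_image.mp hr
  have hrS : r ∈ S := hri ▸ hrep i₀ hi₀ 0 hp
  have hwr : w r = w i₀ := hri ▸ hw i₀ hi₀ 0 hp
  have hr0 : repl p (w r) r 0 = r := by
    rw [hwr, ← hri]
    exact repl_repl hp hp 0
  have hfe : S.filter (fun i => R i = r) = (Finset.range p).image (fun d => repl p (w r) r d) := by
    ext x
    simp only [Finset.mem_filter, Finset.mem_image, Finset.mem_range]
    constructor
    · rintro ⟨hxS, hxR⟩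
      have hwx : w r = w x := by
        rw [← hxR]
        exact hw x hxS 0 hp
      refine ⟨x / p ^ (w x) % p, Nat.mod_lt _ hp, ?_⟩
      rw [hwx, ← hxR]
      show repl p (w x) (repl p (w x) x 0) (x / p ^ (w x) % p) = x
      rw [repl_repl hp hp, repl_self]
    · rintro ⟨d, hd, rfl⟩
      refine ⟨hrep r hrS d hd, ?_⟩
      show repl p (w (repl p (w r) r d)) (repl p (w r) r d) 0 = r
      rw [hw r hrS d hd, repl_repl hp hd, hr0]
  rw [hfe, Finset.sum_image ?inj]
  case inj =>
    intro d₁ h₁ d₂ h₂ heq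
    have e1 := repl_dgt (p := p) (w := w r) (I := r) hp (Finset.mem_range.mp h₁)
    have e2 := repl_dgt (p := p) (w := w r) (I := r) hp (Finset.mem_range.mp h₂)
    rw [show repl p (w r) r d₁ = repl p (w r) r d₂ from heq] at e1
    omega
  have hstep : ∀ d ∈ Finset.range p, f (repl p (w r) r d) = f r * zeta p (d * c r) := by
    intro d hd
    rw [hf r hrS d (Finset.mem_range.mp hd), hr0]
  rw [Finset.sum_congr rfl hstep, ← Finset.mul_sum, zeta_geom p hp (c r) (hc r hrS), mul_zero]

/-- coefficient of the digit at position `k` in `Fval`, reading all other digits from `I`. -/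
def Cval (p q n r : ℕ) (hn : 2 ≤ n) (π : Equiv.Perm (Fin n)) (γ : Fin n → ℕ)
    (α β δ k I : ℕ) : ℤ :=
  ((q / p : ℕ) : ℤ) *
    ((∑ i : Fin n, if h : 1 ≤ (i : ℕ) then
        ((if ((π i : Fin n) : ℕ) = k then (dgt p (n + r) (π ⟨(i : ℕ) - 1, by omega⟩) I : ℤ) else 0)
         + (if ((π ⟨(i : ℕ) - 1, by omega⟩ : Fin n) : ℕ) = k then (dgt p (n + r) (π i) I : ℤ)
            else 0))
      else 0)
    + ((if ((π ⟨0, by omega⟩ : Fin n) : ℕ) = k then (α : ℤ) else 0)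
       + (if ((π ⟨n - 1, by omega⟩ : Fin n) : ℕ) = k then (β : ℤ) else 0))
    + ∑ j ∈ Finset.range r, (if n + j = k then (dgt p r j δ : ℤ) else 0))
  + ∑ i : Fin n, (if ((i : Fin n) : ℕ) = k then (γ i : ℤ) else 0)

set_option maxHeartbeats 2000000 in
lemma linF (p q n r : ℕ) (hn : 2 ≤ n) (π : Equiv.Perm (Fin n)) (γ : Fin n → ℕ) (θ : ℕ)
    (α β δ : ℕ) (k : ℕ) (I J : ℕ)
    (hoff : ∀ k' < n + r, k' ≠ k → dgt p (n + r) k' I = dgt p (n + r) k' J) :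
    Fval p q n r hn π γ θ α β δ I = Fval p q n r hn π γ θ α β δ J
      + ((dgt p (n + r) k I : ℤ) - (dgt p (n + r) k J : ℤ))
        * Cval p q n r hn π γ α β δ k J := by
  have hval : ∀ i : Fin n, ((π i : Fin n) : ℕ) < n + r := fun i => by
    have := (π i).isLt; omega
  have hvi : ∀ i : Fin n, ((i : Fin n) : ℕ) < n + r := fun i => by
    have := i.isLt; omega
  set Δ : ℤ := (dgt p (n + r) k I : ℤ) - (dgt p (n + r) k J : ℤ) with hΔ
  unfold Fval Cval
  have hA : (∑ i : Fin n, if h : 1 ≤ (i : ℕ) then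
        (dgt p (n + r) (π ⟨(i : ℕ) - 1, by omega⟩) I : ℤ) * (dgt p (n + r) (π i) I : ℤ)
      else 0)
      = (∑ i : Fin n, if h : 1 ≤ (i : ℕ) then
          (dgt p (n + r) (π ⟨(i : ℕ) - 1, by omega⟩) J : ℤ) * (dgt p (n + r) (π i) J : ℤ)
        else 0)
      + Δ * (∑ i : Fin n, if h : 1 ≤ (i : ℕ) then
        ((if ((π i : Fin n) : ℕ) = k then (dgt p (n + r) (π ⟨(i : ℕ) - 1, by omega⟩) J : ℤ) else 0)
         + (if ((π ⟨(i : ℕ) - 1, by omega⟩ : Fin n) : ℕ) = k then (dgt p (n + r) (π i) J : ℤ)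
            else 0))
      else 0) := by
    rw [Finset.mul_sum, ← Finset.sum_add_distrib]
    apply Finset.sum_congr rfl
    intro i _
    by_cases h : 1 ≤ (i : ℕ)
    · simp only [dif_pos h]
      have hne : (⟨(i : ℕ) - 1, by omega⟩ : Fin n) ≠ i := by
        intro hcon
        have := congrArg Fin.val hcon
        simp at this
        omega
      by_cases h1 : ((π i : Fin n) : ℕ) = k
      · have h2 : ((π ⟨(i : ℕ) - 1, by omega⟩ : Fin n) : ℕ) ≠ k := by
          intro hcon
          exact hne (π.injective (Fin.val_injective (hcon.trans h1.symm)))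
        rw [if_pos h1, if_neg h2]
        have e1 : dgt p (n + r) (π ⟨(i : ℕ) - 1, by omega⟩) I
            = dgt p (n + r) (π ⟨(i : ℕ) - 1, by omega⟩) J := hoff _ (hval _) h2
        rw [e1, h1, hΔ]
        ring
      · rw [if_neg h1]
        by_cases h2 : ((π ⟨(i : ℕ) - 1, by omega⟩ : Fin n) : ℕ) = k
        · rw [if_pos h2]
          have e1 : dgt p (n + r) (π i) I = dgt p (n + r) (π i) J := hoff _ (hval _) h1
          rw [e1, h2, hΔ]
          ring
        · rw [if_neg h2]
          rw [hoff _ (hval _) h1, hoff _ (hval _) h2]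
          ring
    · simp only [dif_neg h]
      ring
  have hB : (∑ i : Fin n, (γ i : ℤ) * (dgt p (n + r) i I : ℤ))
      = (∑ i : Fin n, (γ i : ℤ) * (dgt p (n + r) i J : ℤ))
      + Δ * ∑ i : Fin n, (if ((i : Fin n) : ℕ) = k then (γ i : ℤ) else 0) := by
    rw [Finset.mul_sum, ← Finset.sum_add_distrib]
    apply Finset.sum_congr rfl
    intro i _
    by_cases h1 : ((i : Fin n) : ℕ) = k
    · rw [if_pos h1, h1, hΔ]; ring
    · rw [if_neg h1, hoff _ (hvi _) h1]; ring
  have hC : (α : ℤ) * (dgt p (n + r) (π ⟨0, by omega⟩) I : ℤ)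
        + (β : ℤ) * (dgt p (n + r) (π ⟨n - 1, by omega⟩) I : ℤ)
      = ((α : ℤ) * (dgt p (n + r) (π ⟨0, by omega⟩) J : ℤ)
        + (β : ℤ) * (dgt p (n + r) (π ⟨n - 1, by omega⟩) J : ℤ))
      + Δ * ((if ((π ⟨0, by omega⟩ : Fin n) : ℕ) = k then (α : ℤ) else 0)
       + (if ((π ⟨n - 1, by omega⟩ : Fin n) : ℕ) = k then (β : ℤ) else 0)) := by
    by_cases h1 : ((π ⟨0, by omega⟩ : Fin n) : ℕ) = k <;>
      by_cases h2 : ((π ⟨n - 1, by omega⟩ : Fin n) : ℕ) = k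
    · rw [if_pos h1, if_pos h2, h1, h2, hΔ]; ring
    · rw [if_pos h1, if_neg h2, h1, hoff _ (hval _) h2, hΔ]; ring
    · rw [if_neg h1, if_pos h2, h2, hoff _ (hval _) h1, hΔ]; ring
    · rw [if_neg h1, if_neg h2, hoff _ (hval _) h1, hoff _ (hval _) h2]; ring
  have hD : (∑ j ∈ Finset.range r, (dgt p r j δ : ℤ) * (dgt p (n + r) (n + j) I : ℤ))
      = (∑ j ∈ Finset.range r, (dgt p r j δ : ℤ) * (dgt p (n + r) (n + j) J : ℤ))
      + Δ * ∑ j ∈ Finset.range r, (if n + j = k then (dgt p r j δ : ℤ) else 0) := by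
    rw [Finset.mul_sum, ← Finset.sum_add_distrib]
    apply Finset.sum_congr rfl
    intro j hj
    have hjr : j < r := Finset.mem_range.mp hj
    by_cases h1 : n + j = k
    · rw [if_pos h1, h1, hΔ]; ring
    · rw [if_neg h1, hoff _ (by omega) h1]; ring
  linear_combination ((q / p : ℕ) : ℤ) * hA + hB + ((q / p : ℕ) : ℤ) * hC
    + ((q / p : ℕ) : ℤ) * hD

lemma Fval_beta (p q n r : ℕ) (hn : 2 ≤ n) (π : Equiv.Perm (Fin n)) (γ : Fin n → ℕ) (θ : ℕ)
    (α β δ I : ℕ) :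
    Fval p q n r hn π γ θ α β δ I = Fval p q n r hn π γ θ α 0 δ I
      + ((q / p : ℕ) : ℤ) * ((β : ℤ) * (dgt p (n + r) (π ⟨n - 1, by omega⟩) I : ℤ)) := by
  unfold Fval
  push_cast
  ring

lemma Cval_congr (p q n r : ℕ) (hn : 2 ≤ n) (π : Equiv.Perm (Fin n)) (γ : Fin n → ℕ)
    (α β δ k : ℕ) (I J : ℕ)
    (hoff : ∀ k' < n + r, k' ≠ k → dgt p (n + r) k' I = dgt p (n + r) k' J) :
    Cval p q n r hn π γ α β δ k I = Cval p q n r hn π γ α β δ k J := by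
  have hval : ∀ i : Fin n, ((π i : Fin n) : ℕ) < n + r := fun i => by
    have := (π i).isLt; omega
  unfold Cval
  congr 1
  congr 1
  congr 1
  congr 1
  apply Finset.sum_congr rfl
  intro i _
  by_cases h : 1 ≤ (i : ℕ)
  · simp only [dif_pos h]
    congr 1
    · by_cases h1 : ((π i : Fin n) : ℕ) = k
      · have hne : (⟨(i : ℕ) - 1, by omega⟩ : Fin n) ≠ i := by
          intro hcon
          have := congrArg Fin.val hcon
          simp at this
          omega
        have h2 : ((π ⟨(i : ℕ) - 1, by omega⟩ : Fin n) : ℕ) ≠ k := by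
          intro hcon
          exact hne (π.injective (Fin.val_injective (hcon.trans h1.symm)))
        rw [if_pos h1, if_pos h1, hoff _ (hval _) h2]
      · rw [if_neg h1, if_neg h1]
    · by_cases h2 : ((π ⟨(i : ℕ) - 1, by omega⟩ : Fin n) : ℕ) = k
      · have hne : (⟨(i : ℕ) - 1, by omega⟩ : Fin n) ≠ i := by
          intro hcon
          have := congrArg Fin.val hcon
          simp at this
          omega
        have h1 : ((π i : Fin n) : ℕ) ≠ k := by
          intro hcon
          exact hne (π.injective (Fin.val_injective (h2.trans hcon.symm)))
        rw [if_pos h2, if_pos h2, hoff _ (hval _) h1]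
      · rw [if_neg h2, if_neg h2]
  · simp only [dif_neg h]

set_option maxHeartbeats 1000000 in
lemma Cval_diff (p q n r : ℕ) (hn : 2 ≤ n) (π : Equiv.Perm (Fin n)) (γ : Fin n → ℕ)
    (α₁ β δ₁ α₂ δ₂ : ℕ) (v : ℕ) (hv : v + 1 < n) (i j : ℕ)
    (hmax : ∀ u : Fin n, v < (u : ℕ) → dgt p (n + r) (π u) j = dgt p (n + r) (π u) i) :
    Cval p q n r hn π γ α₁ β δ₁ ((π ⟨v + 1, hv⟩ : Fin n) : ℕ) j
      - Cval p q n r hn π γ α₂ β δ₂ ((π ⟨v + 1, hv⟩ : Fin n) : ℕ) i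
    = ((q / p : ℕ) : ℤ) *
        ((dgt p (n + r) (π ⟨v, by omega⟩) j : ℤ) - (dgt p (n + r) (π ⟨v, by omega⟩) i : ℤ)) := by
  have hinj : ∀ x y : Fin n, (((π x : Fin n) : ℕ) = ((π y : Fin n) : ℕ)) → x = y := by
    intro x y h
    exact π.injective (Fin.val_injective h)
  unfold Cval
  have hδ : ∀ δ' : ℕ, (∑ j' ∈ Finset.range r,
      (if n + j' = ((π ⟨v + 1, hv⟩ : Fin n) : ℕ) then (dgt p r j' δ' : ℤ) else 0)) = 0 := by
    intro δ'
    apply Finset.sum_eq_zero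
    intro j' _
    rw [if_neg]
    have := (π ⟨v + 1, hv⟩).isLt
    omega
  have hα : ∀ α' : ℕ, (if ((π ⟨0, by omega⟩ : Fin n) : ℕ) = ((π ⟨v + 1, hv⟩ : Fin n) : ℕ)
      then (α' : ℤ) else 0) = 0 := by
    intro α'
    rw [if_neg]
    intro hcon
    have := congrArg Fin.val (hinj _ _ hcon)
    simp at this
  have hquad : (∑ i' : Fin n, if h : 1 ≤ (i' : ℕ) then
        ((if ((π i' : Fin n) : ℕ) = ((π ⟨v + 1, hv⟩ : Fin n) : ℕ) then
            (dgt p (n + r) (π ⟨(i' : ℕ) - 1, by omega⟩) j : ℤ) else 0)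
         + (if ((π ⟨(i' : ℕ) - 1, by omega⟩ : Fin n) : ℕ) = ((π ⟨v + 1, hv⟩ : Fin n) : ℕ) then
            (dgt p (n + r) (π i') j : ℤ) else 0))
      else 0)
      - (∑ i' : Fin n, if h : 1 ≤ (i' : ℕ) then
        ((if ((π i' : Fin n) : ℕ) = ((π ⟨v + 1, hv⟩ : Fin n) : ℕ) then
            (dgt p (n + r) (π ⟨(i' : ℕ) - 1, by omega⟩) i : ℤ) else 0)
         + (if ((π ⟨(i' : ℕ) - 1, by omega⟩ : Fin n) : ℕ) = ((π ⟨v + 1, hv⟩ : Fin n) : ℕ) then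
            (dgt p (n + r) (π i') i : ℤ) else 0))
      else 0)
      = (dgt p (n + r) (π ⟨v, by omega⟩) j : ℤ) - (dgt p (n + r) (π ⟨v, by omega⟩) i : ℤ) := by
    rw [← Finset.sum_sub_distrib]
    rw [Finset.sum_eq_single (⟨v + 1, hv⟩ : Fin n)]
    · have h1 : 1 ≤ ((⟨v + 1, hv⟩ : Fin n) : ℕ) := by simp
      simp only [dif_pos h1]
      have e2 : ∀ (hx : ((⟨v + 1, hv⟩ : Fin n) : ℕ) - 1 < n) (hy : v < n),
          (⟨((⟨v + 1, hv⟩ : Fin n) : ℕ) - 1, hx⟩ : Fin n) = ⟨v, hy⟩ := by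
        intro hx hy
        apply Fin.ext
        simp
      rw [e2 _ (by omega)]
      have e3 : ((π (⟨v, by omega⟩ : Fin n) : Fin n) : ℕ) ≠ ((π ⟨v + 1, hv⟩ : Fin n) : ℕ) := by
        intro hcon
        have := congrArg Fin.val (hinj _ _ hcon)
        simp at this
      simp only [if_true, if_neg e3]
      ring
    · intro b _ hb
      by_cases h : 1 ≤ (b : ℕ)
      · simp only [dif_pos h]
        have h1 : ((π b : Fin n) : ℕ) ≠ ((π ⟨v + 1, hv⟩ : Fin n) : ℕ) := by
          intro hcon
          exact hb (hinj _ _ hcon)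
        rw [if_neg h1, if_neg h1]
        by_cases h2 : ((π ⟨(b : ℕ) - 1, by omega⟩ : Fin n) : ℕ) = ((π ⟨v + 1, hv⟩ : Fin n) : ℕ)
        · have hbv : (b : ℕ) - 1 = v + 1 := by
            have := congrArg Fin.val (hinj _ _ h2)
            simpa using this
          rw [if_pos h2, if_pos h2, hmax b (by omega)]
          ring
        · rw [if_neg h2, if_neg h2]
          ring
      · simp only [dif_neg h]
        ring
    · intro hcon
      exact absurd (Finset.mem_univ _) hcon
  rw [hδ δ₁, hδ δ₂, hα α₁, hα α₂]
  linear_combination ((q / p : ℕ) : ℤ) * hquad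

lemma dgt_lt {p m k I : ℕ} (hp : 0 < p) : dgt p m k I < p := Nat.mod_lt _ hp

lemma not_dvd_eps (p : ℕ) (hp : 0 < p) (ε : ℤ) (hε : ε = 1 ∨ ε = -1) (a b : ℕ)
    (ha : a < p) (hb : b < p) (hne : a ≠ b) : ¬ (p : ℤ) ∣ ε * ((a : ℤ) - b) := by
  intro h
  have h' : (p : ℤ) ∣ ((a : ℤ) - b) := by
    rcases hε with rfl | rfl
    · simpa using h
    · rw [neg_one_mul, dvd_neg] at h
      exact h
  obtain ⟨k, hk⟩ := h'
  have hpk : (a : ℤ) - b = p * k := hk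
  rcases lt_trichotomy k 0 with h1 | h1 | h1
  · nlinarith [Int.ofNat_nonneg a, Int.ofNat_nonneg b]
  · apply hne
    have : (a : ℤ) = b := by rw [h1, mul_zero] at hpk; linarith
    exact_mod_cast this
  · nlinarith [Int.ofNat_nonneg a, Int.ofNat_nonneg b]

set_option maxHeartbeats 4000000 in
lemma core (p q n r : ℕ) (hp : 2 ≤ p) (hq : 0 < q) (hpq : p ∣ q) (hn : 2 ≤ n)
    (π : Equiv.Perm (Fin n)) (γ : Fin n → ℕ) (θ : ℕ) (α₁ δ₁ α₂ δ₂ : ℕ)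
    (ε : ℤ) (hε : ε = 1 ∨ ε = -1) (σ : ℕ) (hσ : p ^ r ≤ σ) :
    ∑ β ∈ Finset.range p, ∑ i ∈ Finset.range (p ^ (n + r) - σ),
      zeta q (ε * (Fval p q n r hn π γ θ α₁ β δ₁ (i + σ)
        - Fval p q n r hn π γ θ α₂ β δ₂ i)) = 0 := by
  classical
  have hp0 : 0 < p := by omega
  set m := n + r with hm
  set πN : ℕ → ℕ := fun u => if h : u < n then ((π ⟨u, h⟩ : Fin n) : ℕ) else u with hπN
  have πN_lt : ∀ u (h : u < n), πN u = ((π ⟨u, h⟩ : Fin n) : ℕ) := fun u h => dif_pos h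
  have πN_val_lt : ∀ u, u < n → πN u < n := fun u h => by rw [πN_lt u h]; exact (π ⟨u, h⟩).isLt
  -- β-linearity
  have key : ∀ (β i : ℕ),
      zeta q (ε * (Fval p q n r hn π γ θ α₁ β δ₁ (i + σ) - Fval p q n r hn π γ θ α₂ β δ₂ i))
      = zeta q (ε * (Fval p q n r hn π γ θ α₁ 0 δ₁ (i + σ)
          - Fval p q n r hn π γ θ α₂ 0 δ₂ i))
        * zeta p ((β : ℤ) * (ε * ((dgt p m (π ⟨n - 1, by omega⟩) (i + σ) : ℤ)
            - (dgt p m (π ⟨n - 1, by omega⟩) i : ℤ)))) := by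
    intro β i
    rw [Fval_beta p q n r hn π γ θ α₁ β δ₁ (i + σ), Fval_beta p q n r hn π γ θ α₂ β δ₂ i,
      ← zeta_mul_p p q hp0 hq hpq, ← zeta_add]
    congr 1
    push_cast
    ring
  rw [Finset.sum_comm]
  rw [← Finset.sum_filter_add_sum_filter_not (Finset.range (p ^ m - σ))
    (fun i => dgt p m (π ⟨n - 1, by omega⟩) (i + σ) = dgt p m (π ⟨n - 1, by omega⟩) i)]
  have hnot : ∑ i ∈ (Finset.range (p ^ m - σ)).filter
      (fun i => ¬ (dgt p m (π ⟨n - 1, by omega⟩) (i + σ) = dgt p m (π ⟨n - 1, by omega⟩) i)),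
      (∑ β ∈ Finset.range p,
        zeta q (ε * (Fval p q n r hn π γ θ α₁ β δ₁ (i + σ)
          - Fval p q n r hn π γ θ α₂ β δ₂ i))) = 0 := by
    apply Finset.sum_eq_zero
    intro i hi
    obtain ⟨hir, hine⟩ := Finset.mem_filter.mp hi
    rw [Finset.sum_congr rfl (fun β _ => key β i)]
    rw [← Finset.mul_sum]
    rw [zeta_geom p hp0 _ (not_dvd_eps p hp0 ε hε _ _ (dgt_lt hp0) (dgt_lt hp0) hine), mul_zero]
  rw [hnot, add_zero]
  -- now the zero-correlation-zone part on the filtered set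
  set dif : ℕ → ℕ → Prop := fun i u => ¬ (dgt p m (πN u) (i + σ) = dgt p m (πN u) i) with hdif
  set vv : ℕ → ℕ := fun i => Nat.findGreatest (dif i) (n - 1) with hvv
  set wf : ℕ → ℕ := fun i => m - 1 - πN (vv i + 1) with hwf
  set cf : ℕ → ℤ := fun i => ε * ((dgt p m (πN (vv i)) (i + σ) : ℤ)
    - (dgt p m (πN (vv i)) i : ℤ)) with hcf
  set S := (Finset.range (p ^ m - σ)).filter
    (fun i => dgt p m (π ⟨n - 1, by omega⟩) (i + σ) = dgt p m (π ⟨n - 1, by omega⟩) i) with hS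
  have hπn1 : πN (n - 1) = ((π ⟨n - 1, by omega⟩ : Fin n) : ℕ) := πN_lt _ (by omega)
  -- basic facts for i ∈ S
  have hfacts : ∀ i ∈ S, vv i + 1 ≤ n - 1 ∧ dif i (vv i)
      ∧ (∀ u, vv i < u → u ≤ n - 1 → ¬ dif i u) ∧ i + σ < p ^ m := by
    intro i hiS
    obtain ⟨hir, heq⟩ := Finset.mem_filter.mp hiS
    have hirr : i < p ^ m - σ := Finset.mem_range.mp hir
    have hiN : i + σ < p ^ m := by omega
    have hAne : (i + σ) / p ^ r ≠ i / p ^ r := by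
      have h1 : (i + p ^ r) / p ^ r = i / p ^ r + 1 := Nat.add_div_right _ (pow_pos hp0 r)
      have h2 : (i + p ^ r) / p ^ r ≤ (i + σ) / p ^ r := Nat.div_le_div_right (by omega)
      omega
    have hA1 : (i + σ) / p ^ r < p ^ n := by
      apply Nat.div_lt_of_lt_mul
      rw [← pow_add, add_comm r n]
      exact hiN
    have hA2 : i / p ^ r < p ^ n := by
      apply Nat.div_lt_of_lt_mul
      rw [← pow_add, add_comm r n]
      exact lt_of_le_of_lt (Nat.le_add_right i σ) hiN
    have hex : ∃ u, u ≤ n - 1 ∧ dif i u := by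
      have hkex : ∃ k, k < n ∧ ¬ (dgt p m k (i + σ) = dgt p m k i) := by
        by_contra hcon
        push_neg at hcon
        apply hAne
        apply eq_of_dgts p hp0 n _ _ hA1 hA2
        intro w hw
        have e : ∀ X : ℕ, X / p ^ r / p ^ w = X / p ^ (r + w) := fun X => by
          rw [Nat.div_div_eq_div_mul, pow_add]
        rw [e, e]
        have hk := hcon (n - 1 - w) (by omega)
        have e2 : m - 1 - (n - 1 - w) = r + w := by omega
        unfold dgt at hk
        rw [e2] at hk
        exact hk
      obtain ⟨k, hkn, hkne⟩ := hkex
      refine ⟨((π.symm ⟨k, hkn⟩ : Fin n) : ℕ), by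
        have := (π.symm ⟨k, hkn⟩).isLt; omega, ?_⟩
      have hπval : πN ((π.symm ⟨k, hkn⟩ : Fin n) : ℕ) = k := by
        rw [πN_lt _ (π.symm ⟨k, hkn⟩).isLt]
        rw [Fin.eta]
        rw [Equiv.apply_symm_apply]
      simp only [hdif, hπval]
      exact hkne
    obtain ⟨u0, hu0, hdu0⟩ := hex
    have hvP : dif i (vv i) := Nat.findGreatest_spec hu0 hdu0
    have hvle : vv i ≤ n - 1 := Nat.findGreatest_le _
    have hvne : vv i ≠ n - 1 := by
      intro hcon
      apply hvP
      rw [hcon]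
      show dgt p m (πN (n - 1)) (i + σ) = dgt p m (πN (n - 1)) i
      rw [hπn1]
      exact heq
    refine ⟨by omega, hvP, ?_, hiN⟩
    intro u hu1 hu2
    exact Nat.findGreatest_is_greatest hu1 hu2
  -- generic digit-surgery helpers (in `dgt` form)
  have hpres : ∀ w' d' X k', d' < p → m - 1 - k' ≠ w' →
      dgt p m k' (repl p w' X d') = dgt p m k' X := by
    intro w' d' X k' hd' hne
    exact repl_dgt_ne hp0 hd' hne
  have hddgt : ∀ w' d' X k', d' < p → m - 1 - k' = w' →
      dgt p m k' (repl p w' X d') = d' := by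
    intro w' d' X k' hd' hcon
    show repl p w' X d' / p ^ (m - 1 - k') % p = d'
    rw [hcon]
    exact repl_dgt hp0 hd'
  have hwlt : ∀ i ∈ S, wf i < m := by
    intro i hiS
    have h1 := (hfacts i hiS).1
    have h2 : πN (vv i + 1) < n := πN_val_lt _ (by omega)
    have : wf i = m - 1 - πN (vv i + 1) := rfl
    omega
  have hwinj : ∀ i ∈ S, ∀ k', k' < m → m - 1 - k' = wf i → k' = πN (vv i + 1) := by
    intro i hiS k' h1 h2
    have hv1 := (hfacts i hiS).1
    have h3 : πN (vv i + 1) < n := πN_val_lt _ (by omega)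
    have h4 : wf i = m - 1 - πN (vv i + 1) := rfl
    omega
  have hkeqS : ∀ i ∈ S, (i + σ) / p ^ (wf i) % p = i / p ^ (wf i) % p := by
    intro i hiS
    obtain ⟨hv1, hvP, hmax', hiN⟩ := hfacts i hiS
    have h1 := hmax' (vv i + 1) (by omega) hv1
    simp only [hdif, not_not] at h1
    exact h1
  have hadd : ∀ i ∈ S, ∀ d, repl p (wf i) (i + σ) d = repl p (wf i) i d + σ := by
    intro i hiS d
    exact repl_add hp0 σ (hkeqS i hiS)
  -- master pack
  have pack : ∀ i ∈ S, ∀ d, d < p →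
      (repl p (wf i) i d ∈ S ∧ vv (repl p (wf i) i d) = vv i) := by
    intro i hiS d hd
    obtain ⟨hv1, hvP, hmax', hiN⟩ := hfacts i hiS
    obtain ⟨hir, heq⟩ := Finset.mem_filter.mp hiS
    have hirr : i < p ^ m - σ := Finset.mem_range.mp hir
    have hjlt : repl p (wf i) (i + σ) d < p ^ m := repl_lt hp0 hiN (hwlt i hiS) hd
    have haddi := hadd i hiS d
    have hmem : repl p (wf i) i d ∈ Finset.range (p ^ m - σ) := by
      rw [Finset.mem_range]
      omega
    have hiff : ∀ u, u ≤ n - 1 → (dif (repl p (wf i) i d) u ↔ dif i u) := by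
      intro u hu
      have hun : πN u < n := πN_val_lt u (by omega)
      simp only [hdif]
      rw [← haddi]
      by_cases hcase : m - 1 - πN u = wf i
      · have hkk : πN u = πN (vv i + 1) := hwinj i hiS _ (by omega) hcase
        rw [hddgt _ _ _ _ hd hcase, hddgt _ _ _ _ hd hcase]
        have h1 := hkeqS i hiS
        have h2 : dgt p m (πN u) (i + σ) = dgt p m (πN u) i := by
          show (i + σ) / p ^ (m - 1 - πN u) % p = i / p ^ (m - 1 - πN u) % p
          rw [hcase]
          exact h1
        simp [h2]
      · rw [hpres _ _ _ _ hd hcase, hpres _ _ _ _ hd hcase]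
    have hvle : vv i ≤ n - 1 := Nat.findGreatest_le _
    have hvS' : dif (repl p (wf i) i d) (vv i) := (hiff _ hvle).mpr hvP
    have h1 : vv i ≤ vv (repl p (wf i) i d) := Nat.le_findGreatest hvle hvS'
    have hvle2 : vv (repl p (wf i) i d) ≤ n - 1 := Nat.findGreatest_le _
    have hspec2 : dif (repl p (wf i) i d) (vv (repl p (wf i) i d)) :=
      Nat.findGreatest_spec hvle hvS'
    have h2 : vv (repl p (wf i) i d) ≤ vv i := Nat.le_findGreatest hvle2 ((hiff _ hvle2).mp hspec2)
    have hveq : vv (repl p (wf i) i d) = vv i := le_antisymm h2 h1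
    have hfalse : ¬ dif i (n - 1) := by
      simp only [hdif, not_not, hπn1]
      exact heq
    have hS2 : dgt p m (π ⟨n - 1, by omega⟩) (repl p (wf i) i d + σ)
        = dgt p m (π ⟨n - 1, by omega⟩) (repl p (wf i) i d) := by
      have h3 : ¬ dif (repl p (wf i) i d) (n - 1) := fun hc => hfalse ((hiff _ le_rfl).mp hc)
      simp only [hdif, not_not, hπn1] at h3
      exact h3
    exact ⟨Finset.mem_filter.mpr ⟨hmem, hS2⟩, hveq⟩
  refine orbit_sum p hp0 S _ wf cf ?_ ?_ ?_ ?_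
  · intro i hiS d hd
    exact (pack i hiS d hd).1
  · intro i hiS d hd
    show m - 1 - πN (vv (repl p (wf i) i d) + 1) = m - 1 - πN (vv i + 1)
    rw [(pack i hiS d hd).2]
  · -- the phase computation
    intro i hiS d hd
    obtain ⟨hv1, hvP, hmax', hiN⟩ := hfacts i hiS
    have hv1' : vv i + 1 < n := by omega
    have hvn : vv i < n := by omega
    have hklem : πN (vv i + 1) = ((π ⟨vv i + 1, hv1'⟩ : Fin n) : ℕ) := πN_lt _ hv1'
    have haddd := hadd i hiS d
    have hadd0 := hadd i hiS 0
    have hwK : m - 1 - ((π ⟨vv i + 1, hv1'⟩ : Fin n) : ℕ) = wf i := by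
      show _ = m - 1 - πN (vv i + 1)
      rw [hklem]
    -- digits of the two surgered points away from K agree
    have hoffj : ∀ k' < m, k' ≠ ((π ⟨vv i + 1, hv1'⟩ : Fin n) : ℕ) →
        dgt p m k' (repl p (wf i) (i + σ) d) = dgt p m k' (repl p (wf i) (i + σ) 0) := by
      intro k' hk' hne
      have hwne : m - 1 - k' ≠ wf i := by
        intro hcon
        exact hne (by rw [hwinj i hiS k' hk' hcon, hklem])
      rw [hpres _ _ _ _ hd hwne, hpres _ _ _ _ hp0 hwne]
    have hoffi : ∀ k' < m, k' ≠ ((π ⟨vv i + 1, hv1'⟩ : Fin n) : ℕ) →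
        dgt p m k' (repl p (wf i) i d) = dgt p m k' (repl p (wf i) i 0) := by
      intro k' hk' hne
      have hwne : m - 1 - k' ≠ wf i := by
        intro hcon
        exact hne (by rw [hwinj i hiS k' hk' hcon, hklem])
      rw [hpres _ _ _ _ hd hwne, hpres _ _ _ _ hp0 hwne]
    have hoffj2 : ∀ k' < m, k' ≠ ((π ⟨vv i + 1, hv1'⟩ : Fin n) : ℕ) →
        dgt p m k' (repl p (wf i) (i + σ) 0) = dgt p m k' (i + σ) := by
      intro k' hk' hne
      have hwne : m - 1 - k' ≠ wf i := by
        intro hcon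
        exact hne (by rw [hwinj i hiS k' hk' hcon, hklem])
      rw [hpres _ _ _ _ hp0 hwne]
    have hoffi2 : ∀ k' < m, k' ≠ ((π ⟨vv i + 1, hv1'⟩ : Fin n) : ℕ) →
        dgt p m k' (repl p (wf i) i 0) = dgt p m k' i := by
      intro k' hk' hne
      have hwne : m - 1 - k' ≠ wf i := by
        intro hcon
        exact hne (by rw [hwinj i hiS k' hk' hcon, hklem])
      rw [hpres _ _ _ _ hp0 hwne]
    have hdK : ∀ X d', d' < p →
        dgt p m ((π ⟨vv i + 1, hv1'⟩ : Fin n) : ℕ) (repl p (wf i) X d') = d' := by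
      intro X d' hd'
      exact hddgt _ _ _ _ hd' hwK
    have hmaxF : ∀ u : Fin n, vv i < (u : ℕ) →
        dgt p m (π u) (i + σ) = dgt p m (π u) i := by
      intro u hu
      have h1 : ¬ dif i (u : ℕ) := hmax' (u : ℕ) hu (by have := u.isLt; omega)
      simp only [hdif, not_not] at h1
      rw [πN_lt _ u.isLt, Fin.eta] at h1
      exact h1
    show (∑ β ∈ Finset.range p,
        zeta q (ε * (Fval p q n r hn π γ θ α₁ β δ₁ (repl p (wf i) i d + σ)
          - Fval p q n r hn π γ θ α₂ β δ₂ (repl p (wf i) i d))))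
      = (∑ β ∈ Finset.range p,
        zeta q (ε * (Fval p q n r hn π γ θ α₁ β δ₁ (repl p (wf i) i 0 + σ)
          - Fval p q n r hn π γ θ α₂ β δ₂ (repl p (wf i) i 0)))) * zeta p ((d : ℤ) * cf i)
    rw [Finset.sum_mul]
    apply Finset.sum_congr rfl
    intro β _
    rw [← haddd, ← hadd0]
    have hcongr1 : Cval p q n r hn π γ α₁ β δ₁ ((π ⟨vv i + 1, hv1'⟩ : Fin n) : ℕ)
        (repl p (wf i) (i + σ) 0) = Cval p q n r hn π γ α₁ β δ₁
        ((π ⟨vv i + 1, hv1'⟩ : Fin n) : ℕ) (i + σ) :=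
      Cval_congr p q n r hn π γ α₁ β δ₁ _ _ _ hoffj2
    have hcongr2 : Cval p q n r hn π γ α₂ β δ₂ ((π ⟨vv i + 1, hv1'⟩ : Fin n) : ℕ)
        (repl p (wf i) i 0) = Cval p q n r hn π γ α₂ β δ₂
        ((π ⟨vv i + 1, hv1'⟩ : Fin n) : ℕ) i :=
      Cval_congr p q n r hn π γ α₂ β δ₂ _ _ _ hoffi2
    have l1 := linF p q n r hn π γ θ α₁ β δ₁ ((π ⟨vv i + 1, hv1'⟩ : Fin n) : ℕ)
      (repl p (wf i) (i + σ) d) (repl p (wf i) (i + σ) 0) hoffj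
    have l2 := linF p q n r hn π γ θ α₂ β δ₂ ((π ⟨vv i + 1, hv1'⟩ : Fin n) : ℕ)
      (repl p (wf i) i d) (repl p (wf i) i 0) hoffi
    rw [hdK (i + σ) d hd, hdK (i + σ) 0 hp0, hcongr1] at l1
    rw [hdK i d hd, hdK i 0 hp0, hcongr2] at l2
    have hdiff := Cval_diff p q n r hn π γ α₁ β δ₁ α₂ δ₂ (vv i) hv1' i (i + σ) hmaxF
    have hcfi : cf i = ε * ((dgt p m (π ⟨vv i, by omega⟩) (i + σ) : ℤ)
        - (dgt p m (π ⟨vv i, by omega⟩) i : ℤ)) := by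
      show ε * ((dgt p m (πN (vv i)) (i + σ) : ℤ) - (dgt p m (πN (vv i)) i : ℤ)) = _
      rw [πN_lt _ hvn]
    rw [← zeta_mul_p p q hp0 hq hpq ((d : ℤ) * cf i), ← zeta_add]
    congr 1
    rw [hcfi]
    push_cast at l1 l2
    linear_combination ε * l1 - ε * l2 + (ε * (d : ℤ)) * hdiff
  · intro i hiS
    obtain ⟨hv1, hvP, hmax', hiN⟩ := hfacts i hiS
    have hne : dgt p m (πN (vv i)) (i + σ) ≠ dgt p m (πN (vv i)) i := hvP
    exact not_dvd_eps p hp0 ε hε _ _ (dgt_lt hp0) (dgt_lt hp0) hne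

set_option maxHeartbeats 2000000 in
lemma Cval_diff2 (p q n r : ℕ) (hn : 2 ≤ n) (π : Equiv.Perm (Fin n)) (γ : Fin n → ℕ)
    (α₁ β δ₁ α₂ δ₂ : ℕ) (k X : ℕ) :
    Cval p q n r hn π γ α₁ β δ₁ k X - Cval p q n r hn π γ α₂ β δ₂ k X
    = ((q / p : ℕ) : ℤ) * ((if ((π ⟨0, by omega⟩ : Fin n) : ℕ) = k then (α₁ : ℤ) - α₂ else 0)
      + ∑ j ∈ Finset.range r,
          (if n + j = k then (dgt p r j δ₁ : ℤ) - (dgt p r j δ₂ : ℤ) else 0)) := by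
  unfold Cval
  have h1 : (if ((π ⟨0, by omega⟩ : Fin n) : ℕ) = k then (α₁ : ℤ) else 0)
      - (if ((π ⟨0, by omega⟩ : Fin n) : ℕ) = k then (α₂ : ℤ) else 0)
      = (if ((π ⟨0, by omega⟩ : Fin n) : ℕ) = k then (α₁ : ℤ) - α₂ else 0) := by
    by_cases h : ((π ⟨0, by omega⟩ : Fin n) : ℕ) = k <;> simp [h]
  have h2 : (∑ j ∈ Finset.range r, (if n + j = k then (dgt p r j δ₁ : ℤ) else 0))
      - (∑ j ∈ Finset.range r, (if n + j = k then (dgt p r j δ₂ : ℤ) else 0))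
      = ∑ j ∈ Finset.range r,
          (if n + j = k then (dgt p r j δ₁ : ℤ) - (dgt p r j δ₂ : ℤ) else 0) := by
    rw [← Finset.sum_sub_distrib]
    apply Finset.sum_congr rfl
    intro j _
    by_cases h : n + j = k <;> simp [h]
  linear_combination ((q / p : ℕ) : ℤ) * h1 + ((q / p : ℕ) : ℤ) * h2

set_option maxHeartbeats 2000000 in
lemma core2 (p q n r : ℕ) (hp : 2 ≤ p) (hq : 0 < q) (hpq : p ∣ q) (hn : 2 ≤ n)
    (π : Equiv.Perm (Fin n)) (γ : Fin n → ℕ) (θ : ℕ) (α₁ δ₁ α₂ δ₂ : ℕ)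
    (hα₁ : α₁ < p) (hα₂ : α₂ < p) (hδ₁ : δ₁ < p ^ r) (hδ₂ : δ₂ < p ^ r)
    (hne : ¬ (α₁ = α₂ ∧ δ₁ = δ₂)) :
    ∑ β ∈ Finset.range p, ∑ i ∈ Finset.range (p ^ (n + r)),
      zeta q (Fval p q n r hn π γ θ α₁ β δ₁ i - Fval p q n r hn π γ θ α₂ β δ₂ i) = 0 := by
  classical
  have hp0 : 0 < p := by omega
  set m := n + r with hm
  -- choose the position k₀ and the constant c
  have hsel : ∃ k₀ c, k₀ < m ∧ (¬ (p : ℤ) ∣ c) ∧ ∀ X : ℕ,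
      (if ((π ⟨0, by omega⟩ : Fin n) : ℕ) = k₀ then (α₁ : ℤ) - α₂ else 0)
      + (∑ j ∈ Finset.range r,
          (if n + j = k₀ then (dgt p r j δ₁ : ℤ) - (dgt p r j δ₂ : ℤ) else 0)) = c := by
    by_cases hα : α₁ = α₂
    · have hδ : δ₁ ≠ δ₂ := fun h => hne ⟨hα, h⟩
      have hex : ∃ w, w < r ∧ δ₁ / p ^ w % p ≠ δ₂ / p ^ w % p := by
        by_contra hcon
        push_neg at hcon
        exact hδ (eq_of_dgts p hp0 r δ₁ δ₂ hδ₁ hδ₂ hcon)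
      obtain ⟨w, hwr, hwne⟩ := hex
      refine ⟨n + (r - 1 - w), (dgt p r (r - 1 - w) δ₁ : ℤ) - (dgt p r (r - 1 - w) δ₂ : ℤ),
        by omega, ?_, ?_⟩
      · have ew : r - 1 - (r - 1 - w) = w := by omega
        have e1 : dgt p r (r - 1 - w) δ₁ = δ₁ / p ^ w % p := by
          show δ₁ / p ^ (r - 1 - (r - 1 - w)) % p = _
          rw [ew]
        have e2 : dgt p r (r - 1 - w) δ₂ = δ₂ / p ^ w % p := by
          show δ₂ / p ^ (r - 1 - (r - 1 - w)) % p = _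
          rw [ew]
        have := not_dvd_eps p hp0 1 (Or.inl rfl) _ _
          (dgt_lt (p := p) (m := r) (k := r - 1 - w) (I := δ₁) hp0)
          (dgt_lt (p := p) (m := r) (k := r - 1 - w) (I := δ₂) hp0)
          (by rw [e1, e2]; exact hwne)
        simpa using this
      · intro X
        rw [if_neg (by have := (π ⟨0, by omega⟩ : Fin n).isLt; omega)]
        rw [Finset.sum_eq_single (r - 1 - w)]
        · rw [if_pos rfl, zero_add]
        · intro b _ hbne
          rw [if_neg (by omega)]
        · intro hcon
          exact absurd (Finset.mem_range.mpr (by omega)) hcon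
    · refine ⟨((π ⟨0, by omega⟩ : Fin n) : ℕ), (α₁ : ℤ) - α₂, by
        have := (π ⟨0, by omega⟩ : Fin n).isLt; omega, ?_, ?_⟩
      · have := not_dvd_eps p hp0 1 (Or.inl rfl) α₁ α₂ hα₁ hα₂ hα
        simpa using this
      · intro X
        rw [if_pos rfl]
        have hz : (∑ j ∈ Finset.range r,
            (if n + j = ((π ⟨0, by omega⟩ : Fin n) : ℕ) then
              (dgt p r j δ₁ : ℤ) - (dgt p r j δ₂ : ℤ) else 0)) = 0 := by
          apply Finset.sum_eq_zero
          intro j _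
          rw [if_neg (by have := (π ⟨0, by omega⟩ : Fin n).isLt; omega)]
        rw [hz, add_zero]
  obtain ⟨k₀, c, hk₀, hcd, hcval⟩ := hsel
  have hwlt : m - 1 - k₀ < m := by omega
  rw [Finset.sum_comm]
  refine orbit_sum p hp0 (Finset.range (p ^ m)) _ (fun _ => m - 1 - k₀) (fun _ => c) ?_ ?_ ?_ ?_
  · intro i hi d hd
    exact Finset.mem_range.mpr (repl_lt hp0 (Finset.mem_range.mp hi) hwlt hd)
  · intro i hi d hd
    rfl
  · intro i hi d hd
    have hoff1 : ∀ k' < m, k' ≠ k₀ →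
        dgt p m k' (repl p (m - 1 - k₀) i d) = dgt p m k' (repl p (m - 1 - k₀) i 0) := by
      intro k' hk' hne'
      have hwne : m - 1 - k' ≠ m - 1 - k₀ := by omega
      have e1 : dgt p m k' (repl p (m - 1 - k₀) i d) = dgt p m k' i := repl_dgt_ne hp0 hd hwne
      have e2 : dgt p m k' (repl p (m - 1 - k₀) i 0) = dgt p m k' i := repl_dgt_ne hp0 hp0 hwne
      rw [e1, e2]
    have hoff2 : ∀ k' < m, k' ≠ k₀ →
        dgt p m k' (repl p (m - 1 - k₀) i 0) = dgt p m k' i := by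
      intro k' hk' hne'
      exact repl_dgt_ne hp0 hp0 (by omega)
    have hdK : ∀ d', d' < p → dgt p m k₀ (repl p (m - 1 - k₀) i d') = d' := by
      intro d' hd'
      show repl p (m - 1 - k₀) i d' / p ^ (m - 1 - k₀) % p = d'
      exact repl_dgt hp0 hd'
    show (∑ β ∈ Finset.range p,
        zeta q (Fval p q n r hn π γ θ α₁ β δ₁ (repl p (m - 1 - k₀) i d)
          - Fval p q n r hn π γ θ α₂ β δ₂ (repl p (m - 1 - k₀) i d)))
      = (∑ β ∈ Finset.range p,
        zeta q (Fval p q n r hn π γ θ α₁ β δ₁ (repl p (m - 1 - k₀) i 0)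
          - Fval p q n r hn π γ θ α₂ β δ₂ (repl p (m - 1 - k₀) i 0))) * zeta p (d * c)
    rw [Finset.sum_mul]
    apply Finset.sum_congr rfl
    intro β _
    have l1 := linF p q n r hn π γ θ α₁ β δ₁ k₀
      (repl p (m - 1 - k₀) i d) (repl p (m - 1 - k₀) i 0) hoff1
    have l2 := linF p q n r hn π γ θ α₂ β δ₂ k₀
      (repl p (m - 1 - k₀) i d) (repl p (m - 1 - k₀) i 0) hoff1
    rw [hdK d hd, hdK 0 hp0] at l1 l2
    have hC1 := Cval_congr p q n r hn π γ α₁ β δ₁ k₀ (repl p (m - 1 - k₀) i 0) i hoff2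
    have hC2 := Cval_congr p q n r hn π γ α₂ β δ₂ k₀ (repl p (m - 1 - k₀) i 0) i hoff2
    rw [hC1] at l1
    rw [hC2] at l2
    have hdiff : Cval p q n r hn π γ α₁ β δ₁ k₀ i - Cval p q n r hn π γ α₂ β δ₂ k₀ i
        = ((q / p : ℕ) : ℤ) * c := by
      rw [Cval_diff2 p q n r hn π γ α₁ β δ₁ α₂ δ₂ k₀ i, hcval i]
    rw [← zeta_mul_p p q hp0 hq hpq ((d : ℤ) * c), ← zeta_add]
    congr 1
    push_cast at l1 l2
    linear_combination l1 - l2 + (d : ℤ) * hdiff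
  · intro i hi
    exact hcd

/-- Theorem 1: with codes `C_{αp^r+δ} = [χ(F_0^{αp^r+δ}); …; χ(F_{p-1}^{αp^r+δ})]`, the
collection `{C_0,…,C_{p^{1+r}-1}}` is a type-II `(p^{1+r}, p, p^{n+r}-p^r+1, p^{n+r})`-ZCCS:
(i) the cross-correlation sum of any two codes vanishes for all shifts `|τ| ≥ p^r`, and
(ii) the cross-correlation sum of two distinct codes vanishes at shift `0`. -/
theorem stmt_10 (p q n r : ℕ) (hp : 2 ≤ p) (hq : 0 < q) (hpq : p ∣ q) (hn : 2 ≤ n)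
    (π : Equiv.Perm (Fin n)) (γ : Fin n → ℕ) (hγ : ∀ i, γ i < p) (θ : ℕ) (hθ : θ < q) :
    (∀ s < p ^ (1 + r), ∀ t < p ^ (1 + r), ∀ τ : ℤ, (p ^ r : ℤ) ≤ |τ| →
      ∑ β ∈ Finset.range p,
        accs (p ^ (n + r))
          (fun I => zeta q (Fval p q n r hn π γ θ (s / p ^ r) β (s % p ^ r) I))
          (fun I => zeta q (Fval p q n r hn π γ θ (t / p ^ r) β (t % p ^ r) I)) τ = 0) ∧
    (∀ s < p ^ (1 + r), ∀ t < p ^ (1 + r), s ≠ t →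
      ∑ β ∈ Finset.range p,
        accs (p ^ (n + r))
          (fun I => zeta q (Fval p q n r hn π γ θ (s / p ^ r) β (s % p ^ r) I))
          (fun I => zeta q (Fval p q n r hn π γ θ (t / p ^ r) β (t % p ^ r) I)) 0 = 0) := by

  have hp0 : 0 < p := by omega
  have hN : 0 < p ^ (n + r) := pow_pos hp0 _
  constructor
  · intro s hs t ht τ hτ
    rcases le_or_gt 0 τ with hτ0 | hτ0
    · rw [abs_of_nonneg hτ0] at hτ
      by_cases hτN : τ < ((p ^ (n + r) : ℕ) : ℤ)
      · have hacc : ∀ β : ℕ,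
            accs (p ^ (n + r))
              (fun I => zeta q (Fval p q n r hn π γ θ (s / p ^ r) β (s % p ^ r) I))
              (fun I => zeta q (Fval p q n r hn π γ θ (t / p ^ r) β (t % p ^ r) I)) τ
            = ∑ i ∈ Finset.range (p ^ (n + r) - τ.toNat),
                zeta q (1 * (Fval p q n r hn π γ θ (s / p ^ r) β (s % p ^ r) (i + τ.toNat)
                  - Fval p q n r hn π γ θ (t / p ^ r) β (t % p ^ r) i)) := by
          intro β
          unfold accs
          rw [if_pos ⟨hτ0, hτN⟩]
          apply Finset.sum_congr rfl
          intro i _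
          rw [conj_zeta, ← zeta_add]
          congr 1
          ring
        rw [Finset.sum_congr rfl (fun β _ => hacc β)]
        exact core p q n r hp hq hpq hn π γ θ (s / p ^ r) (s % p ^ r) (t / p ^ r) (t % p ^ r)
          1 (Or.inl rfl) τ.toNat (by
            have hc : ((p ^ r : ℕ) : ℤ) = (p : ℤ) ^ r := by push_cast; ring
            rw [← hc] at hτ
            omega)
      · apply Finset.sum_eq_zero
        intro β _
        unfold accs
        rw [if_neg (by omega), if_neg (by omega)]
    · rw [abs_of_neg hτ0] at hτ
      by_cases hτN : -((p ^ (n + r) : ℕ) : ℤ) < τ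
      · have hacc : ∀ β : ℕ,
            accs (p ^ (n + r))
              (fun I => zeta q (Fval p q n r hn π γ θ (s / p ^ r) β (s % p ^ r) I))
              (fun I => zeta q (Fval p q n r hn π γ θ (t / p ^ r) β (t % p ^ r) I)) τ
            = ∑ i ∈ Finset.range (p ^ (n + r) - (-τ).toNat),
                zeta q ((-1) * (Fval p q n r hn π γ θ (t / p ^ r) β (t % p ^ r) (i + (-τ).toNat)
                  - Fval p q n r hn π γ θ (s / p ^ r) β (s % p ^ r) i)) := by
          intro β
          unfold accs
          rw [if_neg (by omega), if_pos ⟨hτN, hτ0⟩]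
          apply Finset.sum_congr rfl
          intro i _
          rw [conj_zeta, ← zeta_add]
          congr 1
          ring
        rw [Finset.sum_congr rfl (fun β _ => hacc β)]
        exact core p q n r hp hq hpq hn π γ θ (t / p ^ r) (t % p ^ r) (s / p ^ r) (s % p ^ r)
          (-1) (Or.inr rfl) (-τ).toNat (by
            have hc : ((p ^ r : ℕ) : ℤ) = (p : ℤ) ^ r := by push_cast; ring
            rw [← hc] at hτ
            omega)
      · apply Finset.sum_eq_zero
        intro β _
        unfold accs
        rw [if_neg (by omega), if_neg (by omega)]
  · intro s hs t ht hst
    have hacc : ∀ β : ℕ,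
        accs (p ^ (n + r))
          (fun I => zeta q (Fval p q n r hn π γ θ (s / p ^ r) β (s % p ^ r) I))
          (fun I => zeta q (Fval p q n r hn π γ θ (t / p ^ r) β (t % p ^ r) I)) 0
        = ∑ i ∈ Finset.range (p ^ (n + r)),
            zeta q (Fval p q n r hn π γ θ (s / p ^ r) β (s % p ^ r) i
              - Fval p q n r hn π γ θ (t / p ^ r) β (t % p ^ r) i) := by
      intro β
      unfold accs
      rw [if_pos ⟨le_refl (0 : ℤ), by exact_mod_cast hN⟩]
      show ∑ i ∈ Finset.range (p ^ (n + r) - (0 : ℤ).toNat), _ = _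
      rw [show (0 : ℤ).toNat = 0 from rfl, Nat.sub_zero]
      apply Finset.sum_congr rfl
      intro i _
      show zeta q (Fval p q n r hn π γ θ (s / p ^ r) β (s % p ^ r) (i + 0))
          * (starRingEnd ℂ) (zeta q (Fval p q n r hn π γ θ (t / p ^ r) β (t % p ^ r) i)) = _
      rw [Nat.add_zero, conj_zeta, ← zeta_add, sub_eq_add_neg]
    rw [Finset.sum_congr rfl (fun β _ => hacc β)]
    have hpow : p ^ (1 + r) = p * p ^ r := by rw [pow_add, pow_one]
    have hs' : s / p ^ r < p := by
      rw [Nat.div_lt_iff_lt_mul (pow_pos hp0 r)]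
      rw [hpow] at hs
      omega
    have ht' : t / p ^ r < p := by
      rw [Nat.div_lt_iff_lt_mul (pow_pos hp0 r)]
      rw [hpow] at ht
      omega
    have hne : ¬ (s / p ^ r = t / p ^ r ∧ s % p ^ r = t % p ^ r) := by
      rintro ⟨h1, h2⟩
      apply hst
      have e1 := Nat.div_add_mod s (p ^ r)
      have e2 := Nat.div_add_mod t (p ^ r)
      rw [h1, h2] at e1
      omega
    exact core2 p q n r hp hq hpq hn π γ θ (s / p ^ r) (s % p ^ r) (t / p ^ r) (t % p ^ r)
      hs' ht' (Nat.mod_lt _ (pow_pos hp0 r)) (Nat.mod_lt _ (pow_pos hp0 r)) hne
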